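/- Let $c_1, c_2 > 0$ and let $x_1 = \frac{\sqrt{c_2}}{\sqrt{c_1}+\sqrt{c_2}} \cdot \frac{1}{\sqrt{2\sqrt{c_1 c_2}}}$, $x_2 = \frac{\sqrt{c_1}}{\sqrt{c_1}+\sqrt{c_2}} \cdot \frac{1}{\sqrt{2\sqrt{c_1 c_2}}}$. Then $x_2 = \frac{2 x_2 + x_1}{2(1 + c_2(x_1 + x_2)^2)}$, i.e., the Nash equilibrium is a fixed point of the LMA adjustment map. -/

import Mathlib

theorem stmt11 (c1 c2 : ℝ) (hc1 : 0 < c1) (hc2 : 0 < c2)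
    (x1 x2 : ℝ)
    (hx1 : x1 = Real.sqrt c2 / (Real.sqrt c1 + Real.sqrt c2) *
      (1 / Real.sqrt (2 * Real.sqrt (c1 * c2))))
    (hx2 : x2 = Real.sqrt c1 / (Real.sqrt c1 + Real.sqrt c2) *
      (1 / Real.sqrt (2 * Real.sqrt (c1 * c2)))) :
    x2 = (2 * x2 + x1) / (2 * (1 + c2 * (x1 + x2) ^ 2)) := by
  have hs1 : 0 < Real.sqrt c1 := Real.sqrt_pos.mpr hc1
  have hs2 : 0 < Real.sqrt c2 := Real.sqrt_pos.mpr hc2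
  set s1 := Real.sqrt c1
  set s2 := Real.sqrt c2
  have hc2' : c2 = s2 ^ 2 := (Real.sq_sqrt hc2.le).symm
  have hmul : Real.sqrt (c1 * c2) = s1 * s2 := Real.sqrt_mul hc1.le c2
  set r := Real.sqrt (2 * Real.sqrt (c1 * c2)) with hr
  have hrpos : 0 < r := Real.sqrt_pos.mpr (by rw [hmul]; positivity)
  have hr2 : r ^ 2 = 2 * (s1 * s2) := by
    rw [hr, Real.sq_sqrt (by rw [hmul]; positivity), hmul]
  have hsum : 0 < s1 + s2 := by positivity
  have hden : 0 < 1 + c2 * (x1 + x2) ^ 2 := by rw [hc2']; positivity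
  rw [eq_div_iff (by positivity)]
  subst hx1 hx2
  rw [hc2']
  field_simp
  linear_combination (-(s1^2*s2 + 2*s1*s2^2 + s2^3)) * hr2
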